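/- Let (D_λ)_{λ∈Λ} be a family of Prüfer domains, R = ∏_{λ∈Λ} D_λ, U an ultrafilter in B, F = F_U the induced ultrafilter on Λ, and x ∈ (U). Then the set (U)^{g(x)} = {r ∈ R | ∃ Y ∈ U ∃ n ∈ ℕ ∀ λ ∈ Λ ∀ P ∈ Y_λ, x_λ divides r_λ^n in the localization of D_λ at P} is a prime ideal of R containing x and satisfying (0)_F ⊆ (U)^{g(x)} ⊆ (U); moreover it is the smallest such prime ideal, i.e. every prime ideal 𝔓 of R with x ∈ 𝔓 and (0)_F ⊆ 𝔓 ⊆ (U) contains (U)^{g(x)}. -/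

import Mathlib

/-!
Common setup: `Λ` is an index set, `D λ` a family of commutative rings,
`R = ∏ λ, D λ` the product ring, and
`B = ∏ λ, P(max (D λ))` the product Boolean algebra of the power sets of the
sets of maximal ideals, realized as the Pi type `∀ l, Set (MaximalSpectrum (D l))`
with its componentwise Boolean algebra structure (meet = componentwise ∩,
join = componentwise ∪, `⊥ = (∅)_λ`, complement componentwise, order = componentwise ⊆).
-/

variable {Λ : Type*} {D : Λ → Type*}

/-- `S(a) = (V(a_λ))_λ ∈ B`, where `V(x)` is the set of maximal ideals containing `x`. -/
def SFam [∀ l, CommRing (D l)] (a : ∀ l, D l) : ∀ l, Set (MaximalSpectrum (D l)) :=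
  fun l => {P | a l ∈ P.asIdeal}

/-- `z(x) = {λ | x_λ = 0}`. -/
def ZFam [∀ l, CommRing (D l)] (x : ∀ l, D l) : Set Λ := {l | x l = 0}

/-- A filter in a Boolean algebra: a nonempty subset not containing `⊥`, closed
under meets, and upward closed. -/
def IsBFilter {B : Type*} [BooleanAlgebra B] (U : Set B) : Prop :=
  U.Nonempty ∧ ⊥ ∉ U ∧ (∀ X ∈ U, ∀ Y ∈ U, X ⊓ Y ∈ U) ∧ (∀ Y ∈ U, ∀ Z, Y ≤ Z → Z ∈ U)

/-- An ultrafilter in a Boolean algebra: a filter containing `Y` or `Yᶜ` for every `Y`. -/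
def IsBUltrafilter {B : Type*} [BooleanAlgebra B] (U : Set B) : Prop :=
  IsBFilter U ∧ ∀ Y, Y ∈ U ∨ Yᶜ ∈ U

/-- Property (+): for all `r` and all nonzero `a` there is `d` lying in every maximal
ideal containing `a` but not `r`, and in no maximal ideal containing `r`. -/
def PropertyPlus (A : Type*) [CommRing A] : Prop :=
  ∀ r a : A, a ≠ 0 → ∃ d : A,
    (∀ M : Ideal A, M.IsMaximal → a ∈ M → r ∉ M → d ∈ M) ∧
    (∀ M : Ideal A, M.IsMaximal → r ∈ M → d ∉ M)

/-- Property (++): for every `r` there is `d` with `D(r) = V(d)`, i.e. the maximal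
ideals containing `d` are exactly those not containing `r`. -/
def PropertyPlusPlus (A : Type*) [CommRing A] : Prop :=
  ∀ r : A, ∃ d : A, ∀ P : MaximalSpectrum A, d ∈ P.asIdeal ↔ r ∉ P.asIdeal

/-- Divisibility in the localization of a ring at a maximal ideal `P`:
`x` divides `y` in `A_P`. -/
def LocDvd {A : Type*} [CommRing A] (P : MaximalSpectrum A) (x y : A) : Prop :=
  (algebraMap A (Localization.AtPrime P.asIdeal) x) ∣
    algebraMap A (Localization.AtPrime P.asIdeal) y

/-- A Prüfer domain: an integral domain whose localization at every maximal ideal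
is a valuation ring. -/
def IsPrueferDomain (A : Type*) [CommRing A] [IsDomain A] : Prop :=
  ∀ P : MaximalSpectrum A, ValuationRing (Localization.AtPrime P.asIdeal)

/-- Membership in `(U)^{g(x)}`: `r ∈ (U)^{g(x)}` iff there are `Y ∈ U` and `n ∈ ℕ`
such that for all `λ` and all `P ∈ Y_λ`, `x_λ` divides `r_λ ^ n` in the localization
of `D λ` at `P`. -/
def UgMem [∀ l, CommRing (D l)] (U : Set (∀ l, Set (MaximalSpectrum (D l))))
    (x r : ∀ l, D l) : Prop :=
  ∃ Y ∈ U, ∃ n : ℕ, ∀ l, ∀ P ∈ Y l, LocDvd P (x l) (r l ^ n)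

/-- The minimal prime `(0)_{F_U}` as a set: those `r` whose zero set `z r` belongs to
the induced ultrafilter `F_U = { {λ | Y_λ ≠ ∅} : Y ∈ U }` on `Λ`. -/
def ZeroFU [∀ l, CommRing (D l)] (U : Set (∀ l, Set (MaximalSpectrum (D l)))) :
    Set (∀ l, D l) :=
  {r | ∃ Y ∈ U, ZFam r = {l | Y l ≠ ∅}}

section Aux

lemma myDvdAddPow {S : Type*} [CommRing S] {a b c : S} {m n : ℕ}
    (hb : a ∣ b ^ m) (hc : a ∣ c ^ n) : a ∣ (b + c) ^ (m + n) := by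
  rw [add_pow]
  refine Finset.dvd_sum fun k hk => ?_
  rcases le_or_gt m k with h | h
  · exact ((hb.trans (pow_dvd_pow b h)).mul_right _).mul_right _
  · have h2 : n ≤ m + n - k := by omega
    exact ((hc.trans (pow_dvd_pow c h2)).mul_left _).mul_right _

/-- In a Prüfer domain one can split `1 = s + t` with `s*b ∈ (a)` and `t*a ∈ (b)`;
moreover, if `b = 0` one can take `q = 1`. -/
lemma prueferSplit {A : Type*} [CommRing A] [IsDomain A]
    (hval : ∀ P : MaximalSpectrum A, ValuationRing (Localization.AtPrime P.asIdeal))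
    (a b : A) : ∃ s t p q : A, s + t = 1 ∧ s * b = a * p ∧ t * a = b * q ∧ (b = 0 → q = 1) := by
  by_cases hb : b = 0
  · exact ⟨1, 0, 0, 1, by ring, by rw [hb]; ring, by rw [hb]; ring, fun _ => rfl⟩
  · have key : (Ideal.span {a}).colon (Ideal.span {b}) ⊔ (Ideal.span {b}).colon (Ideal.span {a})
        = ⊤ := by
      by_contra h
      obtain ⟨M, hM, hle⟩ := Ideal.exists_le_maximal _ h
      haveI := hval ⟨M, hM⟩
      set f := algebraMap A (Localization.AtPrime M) with hf
      have hinj : Function.Injective f :=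
        IsLocalization.injective _ M.primeCompl_le_nonZeroDivisors
      obtain ⟨c, hc | hc⟩ := ValuationRing.cond (f a) (f b)
      · obtain ⟨⟨num, den⟩, hmk⟩ := IsLocalization.mk'_surjective M.primeCompl c
        have h1 : f a * IsLocalization.mk' (Localization.AtPrime M) num den = f b := by
          rw [show IsLocalization.mk' (Localization.AtPrime M) num den = c from hmk]; exact hc
        have h2 : f (a * num) = f (b * den) := by
          rw [map_mul, map_mul, ← IsLocalization.mk'_spec (Localization.AtPrime M) num den,
            ← mul_assoc, h1]
        have h3 : (den : A) * b = a * num := by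
          have := hinj h2
          linear_combination -this
        have hden : (den : A) ∈ M := by
          apply hle
          refine Ideal.mem_sup_left ?_
          rw [Ideal.mem_colon_span_singleton, h3]
          exact Ideal.mem_span_singleton.mpr ⟨num, rfl⟩
        exact den.2 hden
      · obtain ⟨⟨num, den⟩, hmk⟩ := IsLocalization.mk'_surjective M.primeCompl c
        have h1 : f b * IsLocalization.mk' (Localization.AtPrime M) num den = f a := by
          rw [show IsLocalization.mk' (Localization.AtPrime M) num den = c from hmk]; exact hc
        have h2 : f (b * num) = f (a * den) := by
          rw [map_mul, map_mul, ← IsLocalization.mk'_spec (Localization.AtPrime M) num den,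
            ← mul_assoc, h1]
        have h3 : (den : A) * a = b * num := by
          have := hinj h2
          linear_combination -this
        have hden : (den : A) ∈ M := by
          apply hle
          refine Ideal.mem_sup_right ?_
          rw [Ideal.mem_colon_span_singleton, h3]
          exact Ideal.mem_span_singleton.mpr ⟨num, rfl⟩
        exact den.2 hden
    have h1 : (1 : A) ∈ (Ideal.span {a}).colon (Ideal.span {b})
        ⊔ (Ideal.span {b}).colon (Ideal.span {a}) := key ▸ Submodule.mem_top
    obtain ⟨s, hs, t, ht, hst⟩ := Submodule.mem_sup.mp h1
    obtain ⟨p, hp⟩ := Ideal.mem_span_singleton.mp (Ideal.mem_colon_span_singleton.mp hs)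
    obtain ⟨q, hq⟩ := Ideal.mem_span_singleton.mp (Ideal.mem_colon_span_singleton.mp ht)
    exact ⟨s, t, p, q, hst, hp, hq, fun h => absurd h hb⟩

end Aux

/-- For a family of Prüfer domains, an ultrafilter `U` in `B` and `x ∈ (U)`, the set
`(U)^{g(x)}` is a prime ideal of `R` containing `x`, with
`(0)_{F_U} ⊆ (U)^{g(x)} ⊆ (U)`; moreover it is the smallest prime ideal `𝔓` of `R`
with `x ∈ 𝔓` and `(0)_{F_U} ⊆ 𝔓 ⊆ (U)`. -/
theorem stmt_17 [∀ l, CommRing (D l)] [∀ l, IsDomain (D l)]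
    (hpruefer : ∀ l, IsPrueferDomain (D l))
    (U : Set (∀ l, Set (MaximalSpectrum (D l)))) (hU : IsBUltrafilter U)
    (x : ∀ l, D l) (hx : SFam x ∈ U) :
    ∃ I : Ideal (∀ l, D l),
      (∀ r, r ∈ I ↔ UgMem U x r) ∧ I.IsPrime ∧ x ∈ I ∧
      ZeroFU U ⊆ (I : Set (∀ l, D l)) ∧
      (I : Set (∀ l, D l)) ⊆ {a | SFam a ∈ U} ∧
      ∀ 𝔓 : Ideal (∀ l, D l), 𝔓.IsPrime → x ∈ 𝔓 →
        ZeroFU U ⊆ (𝔓 : Set (∀ l, D l)) →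
        (𝔓 : Set (∀ l, D l)) ⊆ {a | SFam a ∈ U} → I ≤ 𝔓 := by
  
  classical
  obtain ⟨⟨hne, hbot, hmeet, hup⟩, hdi⟩ := hU
  -- every member of U has a point
  have hex : ∀ W ∈ U, ∃ (l : Λ) (P : MaximalSpectrum (D l)), P ∈ W l := by
    intro W hW
    by_contra hcon
    push_neg at hcon
    have hWbot : W = ⊥ := funext fun l => Set.eq_empty_iff_forall_notMem.mpr (hcon l)
    exact hbot (hWbot ▸ hW)
  refine ⟨{ carrier := {r | UgMem U x r}
            zero_mem' := ⟨SFam x, hx, 1, fun l P _ => by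
              show algebraMap _ _ (x l) ∣ algebraMap _ _ ((0 : D l) ^ 1)
              rw [pow_one, map_zero]; exact dvd_zero _⟩
            add_mem' := ?_
            smul_mem' := ?_ }, fun r => Iff.rfl, ?_, ?_, ?_, ?_, ?_⟩
  · rintro a b ⟨Y₁, hY₁, n₁, h₁⟩ ⟨Y₂, hY₂, n₂, h₂⟩
    refine ⟨Y₁ ⊓ Y₂, hmeet _ hY₁ _ hY₂, n₁ + n₂, fun l P hP => ?_⟩
    have h1 : algebraMap (D l) (Localization.AtPrime P.asIdeal) (x l)
        ∣ algebraMap (D l) (Localization.AtPrime P.asIdeal) (a l ^ n₁) := h₁ l P hP.1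
    have h2 : algebraMap (D l) (Localization.AtPrime P.asIdeal) (x l)
        ∣ algebraMap (D l) (Localization.AtPrime P.asIdeal) (b l ^ n₂) := h₂ l P hP.2
    rw [map_pow] at h1
    rw [map_pow] at h2
    show algebraMap _ _ (x l) ∣ algebraMap _ _ ((a l + b l) ^ (n₁ + n₂))
    rw [map_pow, map_add]
    exact myDvdAddPow h1 h2
  · rintro c r ⟨Y, hY, n, h⟩
    refine ⟨Y, hY, n, fun l P hP => ?_⟩
    have h1 : algebraMap (D l) (Localization.AtPrime P.asIdeal) (x l)
        ∣ algebraMap (D l) (Localization.AtPrime P.asIdeal) (r l ^ n) := h l P hP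
    show algebraMap _ _ (x l) ∣ algebraMap _ _ ((c l * r l) ^ n)
    rw [mul_pow, map_mul]
    exact h1.mul_left _
  · -- primality
    constructor
    · intro htop
      have h1 : UgMem U x 1 := (Ideal.eq_top_iff_one _).mp htop
      obtain ⟨Y, hY, n, h⟩ := h1
      obtain ⟨l, P, hP⟩ := hex _ (hmeet _ hY _ hx)
      have hd : algebraMap (D l) (Localization.AtPrime P.asIdeal) (x l)
          ∣ algebraMap (D l) (Localization.AtPrime P.asIdeal) ((1 : D l) ^ n) := h l P hP.1
      rw [one_pow, map_one] at hd
      have := (IsLocalization.AtPrime.isUnit_to_map_iff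
        (Localization.AtPrime P.asIdeal) P.asIdeal (x l)).mp (isUnit_of_dvd_one hd)
      exact this hP.2
    · intro a b hab
      obtain ⟨Y, hY, n, h⟩ := hab
      set Z : ∀ l, Set (MaximalSpectrum (D l)) :=
        fun l => {P | P ∈ Y l ∧ LocDvd P (x l) (a l ^ (2 * n))} with hZ
      rcases hdi Z with hZU | hZc
      · exact Or.inl ⟨Z, hZU, 2 * n, fun l P hP => hP.2⟩
      · refine Or.inr ⟨Y ⊓ Zᶜ, hmeet _ hY _ hZc, 2 * n, fun l P hP => ?_⟩
        have hPY : P ∈ Y l := hP.1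
        have hPZ : P ∉ Z l := hP.2
        haveI := hpruefer l P
        have hd : algebraMap (D l) (Localization.AtPrime P.asIdeal) (x l)
            ∣ algebraMap (D l) (Localization.AtPrime P.asIdeal) ((a l * b l) ^ n) := h l P hPY
        rw [mul_pow, map_mul, map_pow, map_pow] at hd
        rcases ValuationRing.dvd_total (algebraMap (D l) (Localization.AtPrime P.asIdeal) (a l) ^ n)
          (algebraMap (D l) (Localization.AtPrime P.asIdeal) (b l) ^ n) with hdd | hdd
        · show algebraMap _ _ (x l) ∣ algebraMap _ _ (b l ^ (2 * n))
          rw [map_pow, two_mul, pow_add]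
          exact hd.trans (mul_dvd_mul_right hdd _)
        · exfalso
          apply hPZ
          refine ⟨hPY, ?_⟩
          show algebraMap _ _ (x l) ∣ algebraMap _ _ (a l ^ (2 * n))
          rw [map_pow, two_mul, pow_add]
          exact hd.trans (mul_dvd_mul_left _ hdd)
  · -- x ∈ I
    exact ⟨SFam x, hx, 1, fun l P _ => by
      show algebraMap _ _ (x l) ∣ algebraMap _ _ (x l ^ 1)
      rw [pow_one]⟩
  · -- ZeroFU ⊆ I
    rintro r ⟨Y, hY, hzr⟩
    refine ⟨Y, hY, 1, fun l P hP => ?_⟩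
    have hl : l ∈ ZFam r := by rw [hzr]; exact Set.nonempty_iff_ne_empty.mp ⟨P, hP⟩
    show algebraMap _ _ (x l) ∣ algebraMap _ _ (r l ^ 1)
    rw [pow_one, show r l = 0 from hl, map_zero]
    exact dvd_zero _
  · -- I ⊆ (U)
    rintro r ⟨Y, hY, n, h⟩
    refine hup _ (hmeet _ hY _ hx) (SFam r) (fun l P hP => ?_)
    have hPY : P ∈ Y l := hP.1
    have hPx : x l ∈ P.asIdeal := hP.2
    by_contra hrP
    have hu : IsUnit (algebraMap (D l) (Localization.AtPrime P.asIdeal) (r l)) :=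
      (IsLocalization.AtPrime.isUnit_to_map_iff _ P.asIdeal (r l)).mpr hrP
    have hd : algebraMap (D l) (Localization.AtPrime P.asIdeal) (x l)
        ∣ algebraMap (D l) (Localization.AtPrime P.asIdeal) (r l ^ n) := h l P hPY
    rw [map_pow] at hd
    have := (IsLocalization.AtPrime.isUnit_to_map_iff
      (Localization.AtPrime P.asIdeal) P.asIdeal (x l)).mp (isUnit_of_dvd_unit hd (hu.pow n))
    exact this hPx
  · -- minimality
    rintro 𝔓 h𝔓 hx𝔓 h0 hUP r ⟨Y, hY, n₀, h₀⟩
    set n := n₀ + 1 with hn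
    have h : ∀ l, ∀ P ∈ Y l, LocDvd P (x l) (r l ^ n) := by
      intro l P hP
      have h1 : algebraMap (D l) (Localization.AtPrime P.asIdeal) (x l)
          ∣ algebraMap (D l) (Localization.AtPrime P.asIdeal) (r l ^ n₀) := h₀ l P hP
      show algebraMap _ _ (x l) ∣ algebraMap _ _ (r l ^ n)
      rw [hn, pow_succ, map_mul]
      exact h1.mul_right _
    choose s t p q hst hsp htq hq1 using fun l => prueferSplit (hpruefer l) (x l) (r l ^ n)
    have e1 : (s : ∀ l, D l) * r ^ n = x * p := funext fun l => hsp l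
    have m1 : (s : ∀ l, D l) * r ^ n ∈ 𝔓 := by
      rw [e1]; exact Ideal.mul_mem_right p 𝔓 hx𝔓
    rcases h𝔓.mem_or_mem m1 with hs' | hr'
    · have e2 : (t : ∀ l, D l) * x = r ^ n * q := funext fun l => htq l
      have m2 : (r : ∀ l, D l) ^ n * q ∈ 𝔓 := by
        rw [← e2]; exact Ideal.mul_mem_left 𝔓 t hx𝔓
      rcases h𝔓.mem_or_mem m2 with hr' | hq'
      · exact h𝔓.mem_of_pow_mem n hr'
      · exfalso
        have hWs : SFam s ∈ U := hUP hs'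
        have hWq : SFam q ∈ U := hUP hq'
        obtain ⟨l, P, hP⟩ := hex _ (hmeet _ (hmeet _ (hmeet _ hY _ hx) _ hWs) _ hWq)
        obtain ⟨⟨⟨hPY, hPx⟩, hPs⟩, hPq⟩ := hP
        have hinj : Function.Injective (algebraMap (D l) (Localization.AtPrime P.asIdeal)) :=
          IsLocalization.injective _ P.asIdeal.primeCompl_le_nonZeroDivisors
        have hd := h l P hPY
        obtain ⟨c, hc⟩ := hd
        by_cases hx0 : x l = 0
        · have hr0 : r l ^ n = 0 := by
            apply hinj
            rw [hc, hx0, map_zero, zero_mul]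
          have h1mem : (1 : D l) ∈ P.asIdeal := hq1 l hr0 ▸ (hPq : q l ∈ P.asIdeal)
          exact P.isMaximal.ne_top ((Ideal.eq_top_iff_one _).mpr h1mem)
        · have hfx : algebraMap (D l) (Localization.AtPrime P.asIdeal) (x l) ≠ 0 := by
            intro h0'
            exact hx0 (hinj (by rw [h0', map_zero]))
          have heq : algebraMap (D l) (Localization.AtPrime P.asIdeal) (t l)
              * algebraMap (D l) (Localization.AtPrime P.asIdeal) (x l)
              = (c * algebraMap (D l) (Localization.AtPrime P.asIdeal) (q l))
                * algebraMap (D l) (Localization.AtPrime P.asIdeal) (x l) := by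
            have h2 := congrArg (algebraMap (D l) (Localization.AtPrime P.asIdeal)) (htq l)
            rw [map_mul, map_mul, hc] at h2
            rw [h2]; ring
          have hcq : algebraMap (D l) (Localization.AtPrime P.asIdeal) (t l)
              = c * algebraMap (D l) (Localization.AtPrime P.asIdeal) (q l) :=
            mul_right_cancel₀ hfx heq
          have htP : t l ∉ P.asIdeal := by
            intro hT
            have h1mem : (1 : D l) ∈ P.asIdeal := hst l ▸ Ideal.add_mem _ hPs hT
            exact P.isMaximal.ne_top ((Ideal.eq_top_iff_one _).mpr h1mem)
          have hu : IsUnit (algebraMap (D l) (Localization.AtPrime P.asIdeal) (t l)) :=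
            (IsLocalization.AtPrime.isUnit_to_map_iff _ P.asIdeal _).mpr htP
          rw [hcq] at hu
          have huq : IsUnit (algebraMap (D l) (Localization.AtPrime P.asIdeal) (q l)) :=
            isUnit_of_mul_isUnit_right hu
          exact (IsLocalization.AtPrime.isUnit_to_map_iff _ P.asIdeal _).mp huq hPq
    · exact h𝔓.mem_of_pow_mem n hr'
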